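/- Let V be the Verma module over the twisted Heisenberg-Virasoro algebra with c_I = 0, c_{L,I} ≠ 0, and h_I/c_{L,I} - 1 = p ∈ ℤ_{>0}. Then the vector Ω = S_p(-I(-1)/c_{L,I}, ..., -I(-p)/c_{L,I})·v_{h,h_I} satisfies L(n)Ω = 0 for all n ≥ 1 and I(n)Ω = 0 for all n ≥ 1; i.e., Ω is a singular vector of conformal weight h + p. -/

import Mathlib

/-- The Schur polynomials `S_r(x_1, x_2, ...)`, defined as the coefficients of the
generating function `exp (∑_{n ≥ 1} (x_n/n) y^n) = ∑_{r ≥ 0} S_r y^r`.  Since the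
series `g = ∑_{n ≥ 1} (x_n/n) y^n` has zero constant term, the coefficient of `y^r`
in `exp g = ∑_k g^k / k!` only receives contributions from `k ≤ r`. -/
noncomputable def schur {A : Type*} [Ring A] [Algebra ℂ A] (x : ℕ → A) (r : ℕ) : A :=
  ∑ k ∈ Finset.range (r + 1),
    ((Nat.factorial k : ℂ)⁻¹) •
      (PowerSeries.coeff (R := A) r
        ((PowerSeries.mk fun n => if n = 0 then 0 else ((n : ℂ)⁻¹) • x n) ^ k))

/-- The generalized binomial coefficient `binom(z, r) = z(z-1)⋯(z-r+1)/r!`. -/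
noncomputable def cchoose (z : ℂ) (r : ℕ) : ℂ :=
  (∏ i ∈ Finset.range r, (z - i)) / (Nat.factorial r)


/-- A representation of the twisted Heisenberg-Virasoro algebra `HVir` at level zero
(`C_I` acts by `0`), with the central elements `C_L`, `C_{LI}` acting by the scalars
`cL`, `cLI`. -/
structure HVirRep (V : Type*) [AddCommGroup V] [Module ℂ V] where
  L : ℤ → Module.End ℂ V
  I : ℤ → Module.End ℂ V
  cL : ℂ
  cLI : ℂ
  rel_LL : ∀ n m : ℤ, L n * L m - L m * L n =
    ((n : ℂ) - m) • L (n + m) +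
      (if n + m = 0 then (((n : ℂ) ^ 3 - n) / 12) * cL else 0) • (1 : Module.End ℂ V)
  rel_LI : ∀ n m : ℤ, L n * I m - I m * L n =
    (-(m : ℂ)) • I (n + m) -
      (if n + m = 0 then ((n : ℂ) ^ 2 + n) * cLI else 0) • (1 : Module.End ℂ V)
  rel_II : ∀ n m : ℤ, I n * I m = I m * I n

open PowerSeries Finset

section SchurRec
variable {A : Type*} [Ring A] [Algebra ℂ A]

/-- The generating series. -/
noncomputable def gser (x : ℕ → A) : PowerSeries A :=
  PowerSeries.mk fun n => if n = 0 then 0 else ((n : ℂ)⁻¹) • x n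

/-- Formal derivative. -/
noncomputable def Dser (f : PowerSeries A) : PowerSeries A :=
  PowerSeries.mk fun n => ((n : ℂ) + 1) • PowerSeries.coeff (R := A) (n + 1) f

lemma coeff_Dser (f : PowerSeries A) (n : ℕ) :
    coeff (R := A) n (Dser f) = ((n : ℂ) + 1) • coeff (R := A) (n + 1) f := coeff_mk _ _

lemma coeff_smulC (c : ℂ) (f : PowerSeries A) (n : ℕ) :
    coeff (R := A) n (c • f) = c • coeff (R := A) n f := rfl

lemma schur_def (x : ℕ → A) (r : ℕ) :
    schur x r = ∑ k ∈ range (r + 1), ((Nat.factorial k : ℂ)⁻¹) • coeff (R := A) r ((gser x) ^ k) :=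
  rfl

lemma Dser_mul (f g : PowerSeries A) : Dser (f * g) = Dser f * g + f * Dser g := by
  ext n
  rw [map_add, coeff_mul, coeff_mul, coeff_Dser, coeff_mul, smul_sum]
  have h1 : ∑ p ∈ antidiagonal n, coeff (R := A) p.1 (Dser f) * coeff (R := A) p.2 g
      = ∑ p ∈ antidiagonal (n + 1), (p.1 : ℂ) • (coeff (R := A) p.1 f * coeff (R := A) p.2 g) := by
    rw [Nat.sum_antidiagonal_succ]
    norm_num
    refine Finset.sum_congr rfl fun p _ => ?_
    rw [coeff_Dser, smul_mul_assoc]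
  have h2 : ∑ p ∈ antidiagonal n, coeff (R := A) p.1 f * coeff (R := A) p.2 (Dser g)
      = ∑ p ∈ antidiagonal (n + 1), (p.2 : ℂ) • (coeff (R := A) p.1 f * coeff (R := A) p.2 g) := by
    rw [Nat.sum_antidiagonal_succ']
    norm_num
    refine Finset.sum_congr rfl fun p _ => ?_
    rw [coeff_Dser, mul_smul_comm]
  rw [h1, h2, ← Finset.sum_add_distrib]
  refine Finset.sum_congr rfl fun p hp => ?_
  rw [← add_smul]
  congr 1
  have := Finset.HasAntidiagonal.mem_antidiagonal.mp hp
  exact_mod_cast (congrArg (Nat.cast : ℕ → ℂ) this.symm)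

lemma coeff_gser_pow_eq_zero (x : ℕ → A) {r k : ℕ} (h : r < k) :
    coeff (R := A) r ((gser x) ^ k) = 0 := by
  have hX : (X : PowerSeries A) ∣ gser x := by
    rw [X_dvd_iff]
    simp [gser, constantCoeff_mk]
  obtain ⟨f, hf⟩ := hX
  have hcomm : Commute (X : PowerSeries A) f := (commute_X f).symm
  have : (gser x) ^ k = X ^ k * f ^ k := by rw [hf, hcomm.mul_pow]
  rw [this]
  exact X_pow_dvd_iff.mp (Dvd.intro _ rfl) r h

lemma schur_eq_sum (x : ℕ → A) (r N : ℕ) (h : r < N) :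
    schur x r = ∑ k ∈ range N, ((Nat.factorial k : ℂ)⁻¹) • coeff (R := A) r ((gser x) ^ k) := by
  rw [schur_def]
  refine Finset.sum_subset (Finset.range_subset_range.mpr h) fun k hk hk' => ?_
  rw [coeff_gser_pow_eq_zero x (by simp at hk hk'; omega), smul_zero]

lemma coeff_Dser_gser (x : ℕ → A) (n : ℕ) : coeff (R := A) n (Dser (gser x)) = x (n + 1) := by
  rw [coeff_Dser]
  show ((n : ℂ) + 1) • coeff (R := A) (n+1) (PowerSeries.mk _) = x (n+1)
  rw [coeff_mk, if_neg (Nat.succ_ne_zero n), smul_smul]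
  push_cast
  rw [mul_inv_cancel₀ (Nat.cast_add_one_ne_zero n), one_smul]

lemma commute_gser_Dser (x : ℕ → A) (hx : ∀ i j, Commute (x i) (x j)) :
    Commute (gser x) (Dser (gser x)) := by
  have hcoeff : ∀ i j, Commute (coeff (R := A) i (gser x)) (coeff (R := A) j (Dser (gser x))) := by
    intro i j
    rw [coeff_Dser_gser]
    show Commute (coeff (R := A) i (PowerSeries.mk _)) _
    rw [coeff_mk]
    split
    · exact Commute.zero_left _
    · exact (hx i (j + 1)).smul_left _
  show gser x * _ = _ * gser x
  ext n
  rw [coeff_mul, coeff_mul, Finset.Nat.sum_antidiagonal_eq_sum_range_succ_mk,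
    Finset.Nat.sum_antidiagonal_eq_sum_range_succ_mk]
  rw [← Finset.sum_range_reflect]
  refine Finset.sum_congr rfl fun j hj => ?_
  simp only [mem_range, Nat.lt_succ_iff] at hj
  have e1 : n.succ - 1 - j = n - j := by omega
  have e2 : n - (n - j) = j := by omega
  simp only [e1, e2]
  exact (hcoeff (n - j) j).eq

lemma Dser_gser_pow (x : ℕ → A) (hx : ∀ i j, Commute (x i) (x j)) (k : ℕ) :
    Dser ((gser x) ^ (k + 1)) = ((k : ℂ) + 1) • (Dser (gser x) * (gser x) ^ k) := by
  induction k with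
  | zero => simp [pow_one, pow_zero, mul_one]
  | succ k ih =>
    have hc : Commute ((gser x) ^ (k + 1)) (Dser (gser x)) :=
      ((commute_gser_Dser x hx)).pow_left (k + 1)
    rw [pow_succ, Dser_mul, ih, smul_mul_assoc, mul_assoc, ← pow_succ, hc.eq]
    module

lemma schur_zero (x : ℕ → A) : schur x 0 = 1 := by
  simp [schur_def]

end SchurRec

lemma schur_rec {A : Type*} [Ring A] [Algebra ℂ A] (x : ℕ → A)
    (hx : ∀ i j, Commute (x i) (x j)) (r : ℕ) :
    ((r : ℂ) + 1) • schur x (r + 1) =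
      ∑ i ∈ range (r + 1), x (i + 1) * schur x (r - i) := by
  have hfac : ∀ k : ℕ, ((Nat.factorial (k+1) : ℂ))⁻¹ * ((k : ℂ) + 1)
      = ((Nat.factorial k : ℂ))⁻¹ := by
    intro k
    have h1 : ((k : ℂ) + 1) ≠ 0 := Nat.cast_add_one_ne_zero k
    have h2 : ((Nat.factorial k : ℂ)) ≠ 0 := Nat.cast_ne_zero.mpr (Nat.factorial_ne_zero k)
    rw [Nat.factorial_succ]
    push_cast
    field_simp
  calc ((r : ℂ) + 1) • schur x (r + 1)
      = ∑ k ∈ range (r + 2), ((r : ℂ) + 1) •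
          (((Nat.factorial k : ℂ))⁻¹ • coeff (R := A) (r+1) ((gser x) ^ k)) := by
        rw [schur_def, smul_sum]
    _ = ∑ k ∈ range (r + 2), ((Nat.factorial k : ℂ))⁻¹ • coeff (R := A) r (Dser ((gser x) ^ k)) := by
        refine Finset.sum_congr rfl fun k _ => ?_
        rw [coeff_Dser]
        exact smul_comm _ _ _
    _ = (∑ k ∈ range (r + 1),
          ((Nat.factorial (k+1) : ℂ))⁻¹ • coeff (R := A) r (Dser ((gser x) ^ (k+1))))
        + ((Nat.factorial 0 : ℂ))⁻¹ • coeff (R := A) r (Dser ((gser x) ^ 0)) :=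
        Finset.sum_range_succ' _ (r + 1)
    _ = ∑ k ∈ range (r + 1),
          ((Nat.factorial k : ℂ))⁻¹ • coeff (R := A) r (Dser (gser x) * (gser x) ^ k) := by
        rw [pow_zero]
        have : coeff (R := A) r (Dser (1 : PowerSeries A)) = 0 := by
          rw [coeff_Dser, coeff_one, if_neg (Nat.succ_ne_zero r), smul_zero]
        rw [this, smul_zero, add_zero]
        refine Finset.sum_congr rfl fun k _ => ?_
        rw [Dser_gser_pow x hx k, coeff_smulC, smul_smul, hfac]
    _ = ∑ k ∈ range (r + 1), ∑ p ∈ antidiagonal r,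
          x (p.1 + 1) * (((Nat.factorial k : ℂ))⁻¹ • coeff (R := A) p.2 ((gser x) ^ k)) := by
        refine Finset.sum_congr rfl fun k _ => ?_
        rw [coeff_mul, smul_sum]
        refine Finset.sum_congr rfl fun p _ => ?_
        rw [coeff_Dser_gser, mul_smul_comm]
    _ = ∑ p ∈ antidiagonal r, x (p.1 + 1) *
          ∑ k ∈ range (r + 1), ((Nat.factorial k : ℂ))⁻¹ • coeff (R := A) p.2 ((gser x) ^ k) := by
        rw [Finset.sum_comm]
        exact Finset.sum_congr rfl fun p _ => (Finset.mul_sum _ _ _).symm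
    _ = ∑ p ∈ antidiagonal r, x (p.1 + 1) * schur x p.2 := by
        refine Finset.sum_congr rfl fun p hp => ?_
        have hp2 : p.2 ≤ r := by
          have := Finset.HasAntidiagonal.mem_antidiagonal.mp hp; omega
        rw [← schur_eq_sum x p.2 (r+1) (by omega)]
    _ = ∑ i ∈ range (r + 1), x (i + 1) * schur x (r - i) :=
        Finset.Nat.sum_antidiagonal_eq_sum_range_succ_mk _ r

section Rep
variable {V : Type*} [AddCommGroup V] [Module ℂ V]

/-- The sequence `x_j = -I(-j)/c_{L,I}`. -/
noncomputable def xv (ρ : HVirRep V) : ℕ → Module.End ℂ V :=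
  fun j => (-(ρ.cLI)⁻¹) • ρ.I (-(j : ℤ))

lemma xv_comm (ρ : HVirRep V) (i j : ℕ) : Commute (xv ρ i) (xv ρ j) := by
  have h : Commute (ρ.I (-(i:ℤ))) (ρ.I (-(j:ℤ))) := ρ.rel_II _ _
  exact (h.smul_left _).smul_right _

lemma LI_comm (ρ : HVirRep V) (n m : ℤ) : ρ.L n * ρ.I m = ρ.I m * ρ.L n +
    ((-(m : ℂ)) • ρ.I (n + m) -
      (if n + m = 0 then ((n : ℂ) ^ 2 + n) * ρ.cLI else 0) • (1 : Module.End ℂ V)) :=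
  sub_eq_iff_eq_add'.mp (ρ.rel_LI n m)

lemma I_comm_schur (ρ : HVirRep V) (m : ℤ) : ∀ r, Commute (ρ.I m) (schur (xv ρ) r) := by
  intro r
  induction r using Nat.strong_induction_on with
  | _ r ih =>
  match r with
  | 0 => rw [schur_zero]; exact Commute.one_right _
  | Nat.succ r =>
    have hT : Commute (ρ.I m)
        (∑ i ∈ Finset.range (r+1), xv ρ (i+1) * schur (xv ρ) (r - i)) := by
      refine Commute.sum_right _ _ _ fun i _ => ?_
      have h : Commute (ρ.I m) (ρ.I (-((i+1:ℕ):ℤ))) := ρ.rel_II _ _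
      exact Commute.mul_right (h.smul_right _) (ih (r - i) (by omega))
    have key := hT.eq
    rw [← schur_rec _ (xv_comm ρ) r, mul_smul_comm, smul_mul_assoc] at key
    exact smul_right_injective (Module.End ℂ V) (Nat.cast_add_one_ne_zero r) key

lemma L0x (ρ : HVirRep V) (j : ℕ) (hj : 1 ≤ j) :
    ρ.L 0 * xv ρ j = xv ρ j * ρ.L 0 + (j : ℂ) • xv ρ j := by
  have h := LI_comm ρ 0 (-(j:ℤ))
  rw [if_neg (by omega), zero_smul, sub_zero, zero_add] at h
  have hcast : (-((-(j:ℤ) : ℤ) : ℂ)) = (j : ℂ) := by push_cast; ring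
  rw [hcast] at h
  show ρ.L 0 * ((-(ρ.cLI)⁻¹) • ρ.I (-(j:ℤ)))
      = ((-(ρ.cLI)⁻¹) • ρ.I (-(j:ℤ))) * ρ.L 0 + (j:ℂ) • ((-(ρ.cLI)⁻¹) • ρ.I (-(j:ℤ)))
  rw [mul_smul_comm, h]
  simp only [smul_add, smul_smul, smul_mul_assoc]
  match_scalars <;> ring

lemma L0_schur (ρ : HVirRep V) : ∀ r : ℕ, ρ.L 0 * schur (xv ρ) r
    = schur (xv ρ) r * ρ.L 0 + (r : ℂ) • schur (xv ρ) r := by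
  intro r
  induction r using Nat.strong_induction_on with
  | _ r ih =>
  match r with
  | 0 => rw [schur_zero]; simp
  | Nat.succ r =>
    have key : ρ.L 0 * (((r:ℂ)+1) • schur (xv ρ) (r+1))
        = (((r:ℂ)+1) • schur (xv ρ) (r+1)) * ρ.L 0
          + ((r:ℂ)+1) • (((r:ℂ)+1) • schur (xv ρ) (r+1)) := by
      rw [schur_rec _ (xv_comm ρ) r, Finset.mul_sum, Finset.sum_mul, Finset.smul_sum,
        ← Finset.sum_add_distrib]
      refine Finset.sum_congr rfl fun i hi => ?_
      have hi' : i ≤ r := by simp only [Finset.mem_range] at hi; omega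
      rw [← mul_assoc, L0x ρ (i+1) (by omega), add_mul, mul_assoc, ih (r - i) (by omega),
        mul_add, ← mul_assoc, mul_smul_comm, smul_mul_assoc, add_assoc, ← add_smul]
      have hsc : ((r - i : ℕ) : ℂ) + ((i+1 : ℕ) : ℂ) = (r : ℂ) + 1 := by
        push_cast [Nat.cast_sub hi']
        ring
      rw [hsc]
    rw [mul_smul_comm, smul_mul_assoc, ← smul_add] at key
    have h2 := smul_right_injective (Module.End ℂ V) (Nat.cast_add_one_ne_zero r) key
    show ρ.L 0 * schur (xv ρ) (r+1) = _
    rw [h2]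
    congr 2
    push_cast
    ring

lemma Lnx (ρ : HVirRep V) (hc : ρ.cLI ≠ 0) (n j : ℕ) (hj : 1 ≤ j) :
    ρ.L (n:ℤ) * xv ρ j = xv ρ j * ρ.L (n:ℤ)
      + ((-(ρ.cLI)⁻¹) * (j:ℂ)) • ρ.I ((n:ℤ) - (j:ℤ))
      + (if j = n then ((n:ℂ)^2 + (n:ℂ)) else 0) • (1 : Module.End ℂ V) := by
  have h := LI_comm ρ (n:ℤ) (-(j:ℤ))
  have hsub : (n:ℤ) + -(j:ℤ) = (n:ℤ) - (j:ℤ) := by ring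
  have hcast : (-((-(j:ℤ) : ℤ) : ℂ)) = (j : ℂ) := by push_cast; ring
  rw [hsub, hcast] at h
  show ρ.L (n:ℤ) * ((-(ρ.cLI)⁻¹) • ρ.I (-(j:ℤ))) = ((-(ρ.cLI)⁻¹) • ρ.I (-(j:ℤ))) * ρ.L (n:ℤ)
      + ((-(ρ.cLI)⁻¹) * (j:ℂ)) • ρ.I ((n:ℤ) - (j:ℤ))
      + (if j = n then ((n:ℂ)^2 + (n:ℂ)) else 0) • (1 : Module.End ℂ V)
  rw [mul_smul_comm, h]
  by_cases hjn : j = n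
  · rw [if_pos (by omega : (n:ℤ) - (j:ℤ) = 0), if_pos hjn, hjn]
    simp only [smul_add, smul_sub, smul_smul, smul_mul_assoc]
    match_scalars
    · ring
    · ring
    · field_simp
  · rw [if_neg (by omega : ¬ ((n:ℤ) - (j:ℤ) = 0)), if_neg hjn]
    simp only [smul_add, smul_sub, smul_smul, smul_mul_assoc, zero_smul, sub_zero, add_zero]

lemma schur_apply_sum (ρ : HVirRep V) (v : V) (r : ℕ) :
    ((r:ℂ)+1) • (schur (xv ρ) (r+1) v) =
      ∑ i ∈ Finset.range (r+1), (xv ρ (i+1)) (schur (xv ρ) (r-i) v) := by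
  have h := congrArg (fun T : Module.End ℂ V => T v) (schur_rec (xv ρ) (xv_comm ρ) r)
  simpa using h

lemma sum_xv_schur (ρ : HVirRep V) (v : V) (m : ℕ) :
    ∑ i ∈ Finset.range m, (xv ρ (i+1)) (schur (xv ρ) (m-1-i) v)
      = (m:ℂ) • schur (xv ρ) m v := by
  match m with
  | 0 => simp
  | Nat.succ m =>
    have h := (schur_apply_sum ρ v m).symm
    have e : ∀ i, m + 1 - 1 - i = m - i := fun i => by omega
    simp only [e]
    rw [h]
    congr 1
    push_cast
    ring

lemma L_schur_v (ρ : HVirRep V) (hc : ρ.cLI ≠ 0) (v : V) (hI : ℂ) (p : ℕ)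
    (hLv : ∀ k : ℤ, 0 < k → ρ.L k v = 0) (hIv : ∀ k : ℤ, 0 < k → ρ.I k v = 0)
    (hI0 : ρ.I 0 v = hI • v) (hIc : hI = ((p:ℂ)+1) * ρ.cLI)
    (n : ℕ) (hn : 1 ≤ n) :
    ∀ r : ℕ, ρ.L (n:ℤ) (schur (xv ρ) r v)
      = if n ≤ r then ((r:ℂ) - (p:ℂ)) • (schur (xv ρ) (r - n) v) else 0 := by
  have hIS : ∀ (m : ℤ) (s : ℕ) (w : V),
      ρ.I m (schur (xv ρ) s w) = schur (xv ρ) s (ρ.I m w) := by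
    intro m s w
    have h := congrArg (fun T : Module.End ℂ V => T w) (I_comm_schur ρ m s).eq
    simpa using h
  intro r
  induction r using Nat.strong_induction_on with
  | _ r ih =>
  match r with
  | 0 =>
    rw [if_neg (by omega), schur_zero]
    simpa using hLv (n:ℤ) (by exact_mod_cast hn)
  | Nat.succ r =>
    have key : ((r:ℂ)+1) • (ρ.L (n:ℤ) (schur (xv ρ) (r+1) v))
        = ∑ i ∈ Finset.range (r+1), ρ.L (n:ℤ) ((xv ρ (i+1)) (schur (xv ρ) (r-i) v)) := by
      rw [← map_smul, schur_apply_sum, map_sum]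
    have hterm : ∀ i ∈ Finset.range (r+1),
        ρ.L (n:ℤ) ((xv ρ (i+1)) (schur (xv ρ) (r-i) v))
        = (xv ρ (i+1)) (ρ.L (n:ℤ) (schur (xv ρ) (r-i) v))
          + ((-(ρ.cLI)⁻¹) * ((i+1:ℕ):ℂ)) • ρ.I ((n:ℤ) - ((i+1:ℕ):ℤ)) (schur (xv ρ) (r-i) v)
          + (if i+1 = n then ((n:ℂ)^2 + (n:ℂ)) else 0) • (schur (xv ρ) (r-i) v) := by
      intro i _
      have h0 : ρ.L (n:ℤ) ((xv ρ (i+1)) (schur (xv ρ) (r-i) v))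
          = (ρ.L (n:ℤ) * xv ρ (i+1)) (schur (xv ρ) (r-i) v) := rfl
      rw [h0, Lnx ρ hc n (i+1) (by omega)]
      simp only [LinearMap.add_apply, LinearMap.smul_apply, Module.End.mul_apply]
      congr 1
    rw [Finset.sum_congr rfl hterm] at key
    by_cases hnr : n ≤ r + 1
    · -- main case
      set m : ℕ := r + 1 - n with hm
      -- evaluate the three sums
      have hL : ∀ i ∈ Finset.range (r+1),
          (xv ρ (i+1)) (ρ.L (n:ℤ) (schur (xv ρ) (r-i) v))
            = (if n ≤ r - i then (((r-i:ℕ):ℂ) - (p:ℂ)) • (xv ρ (i+1)) (schur (xv ρ) (r-i-n) v)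
               else 0) := by
        intro i _
        rw [ih (r-i) (by omega)]
        split_ifs
        · rw [map_smul]
        · rw [map_zero]
      have hmid : ∀ i ∈ Finset.range (r+1),
          ((-(ρ.cLI)⁻¹) * ((i+1:ℕ):ℂ)) • ρ.I ((n:ℤ) - ((i+1:ℕ):ℤ)) (schur (xv ρ) (r-i) v)
          = (if i+1 = n then (-(n:ℂ)*((p:ℂ)+1)) • schur (xv ρ) (r-i) v else 0)
            + (if n < i+1 then ((i+1:ℕ):ℂ) • (xv ρ (i+1-n)) (schur (xv ρ) (r-i) v) else 0) := by
        intro i _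
        rcases lt_trichotomy (i+1) n with hlt | heq | hgt
        · rw [if_neg (by omega), if_neg (by omega), hIS,
            hIv ((n:ℤ) - ((i+1:ℕ):ℤ)) (by omega), map_zero, smul_zero, add_zero]
        · rw [if_pos heq, if_neg (by omega)]
          have e0 : ((n:ℤ) - ((i+1:ℕ):ℤ)) = 0 := by omega
          rw [e0, hIS, hI0, map_smul, smul_smul, add_zero]
          have e1 : ((i+1:ℕ):ℂ) = (n:ℂ) := by exact_mod_cast congrArg (Nat.cast : ℕ → ℂ) heq
          rw [e1, hIc]
          congr 1
          field_simp
        · rw [if_neg (by omega), if_pos (by omega), zero_add]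
          have e0 : ((n:ℤ) - ((i+1:ℕ):ℤ)) = -(((i+1-n : ℕ)):ℤ) := by omega
          rw [e0]
          show _ • ρ.I (-((i+1-n:ℕ):ℤ)) (schur (xv ρ) (r-i) v)
            = ((i+1:ℕ):ℂ) • ((-(ρ.cLI)⁻¹) • ρ.I (-((i+1-n:ℕ):ℤ))) (schur (xv ρ) (r-i) v)
          rw [LinearMap.smul_apply, smul_smul]
          congr 1
          ring
      have hC : ∑ i ∈ Finset.range (r+1),
          (if i+1 = n then ((n:ℂ)^2 + (n:ℂ)) else 0) • (schur (xv ρ) (r-i) v)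
          = ((n:ℂ)^2 + (n:ℂ)) • schur (xv ρ) m v := by
        rw [Finset.sum_eq_single (n-1)]
        · have e : r - (n-1) = m := by omega
          rw [if_pos (by omega : (n-1)+1 = n), e]
        · intro b _ hb
          rw [if_neg (by omega), zero_smul]
        · intro hmem
          exact absurd (Finset.mem_range.mpr (by omega)) hmem
      have hB1 : ∑ i ∈ Finset.range (r+1),
          (if i+1 = n then (-(n:ℂ)*((p:ℂ)+1)) • schur (xv ρ) (r-i) v else 0)
          = (-(n:ℂ)*((p:ℂ)+1)) • schur (xv ρ) m v := by
        rw [Finset.sum_eq_single (n-1)]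
        · have e : r - (n-1) = m := by omega
          rw [if_pos (by omega : (n-1)+1 = n), e]
        · intro b _ hb
          rw [if_neg (by omega)]
        · intro hmem
          exact absurd (Finset.mem_range.mpr (by omega)) hmem
      have hB2 : ∑ i ∈ Finset.range (r+1),
          (if n < i+1 then ((i+1:ℕ):ℂ) • (xv ρ (i+1-n)) (schur (xv ρ) (r-i) v) else 0)
          = ∑ i ∈ Finset.range m, (((n+i+1:ℕ)):ℂ) • (xv ρ (i+1)) (schur (xv ρ) (m-1-i) v) := by
        rw [← Finset.sum_filter]
        have hfil : Finset.filter (fun i => n < i+1) (Finset.range (r+1)) = Finset.Ico n (r+1) := by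
          ext i
          simp only [Finset.mem_filter, Finset.mem_range, Finset.mem_Ico]
          omega
        rw [hfil, Finset.sum_Ico_eq_sum_range]
        have hcnt : r + 1 - n = m := rfl
        rw [hcnt]
        refine Finset.sum_congr rfl fun i hi => ?_
        have him : i < m := Finset.mem_range.mp hi
        have e1 : n + i + 1 - n = i + 1 := by omega
        have e2 : r - (n + i) = m - 1 - i := by omega
        rw [e1, e2]
      have hA : ∑ i ∈ Finset.range (r+1),
          (if n ≤ r - i then (((r-i:ℕ):ℂ) - (p:ℂ)) • (xv ρ (i+1)) (schur (xv ρ) (r-i-n) v)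
           else 0)
          = ∑ i ∈ Finset.range m, (((r-i:ℕ):ℂ) - (p:ℂ)) • (xv ρ (i+1)) (schur (xv ρ) (m-1-i) v) := by
        rw [← Finset.sum_filter]
        have hfil : Finset.filter (fun i => n ≤ r - i) (Finset.range (r+1)) = Finset.range m := by
          ext i
          simp only [Finset.mem_filter, Finset.mem_range]
          omega
        rw [hfil]
        refine Finset.sum_congr rfl fun i hi => ?_
        have him : i < m := Finset.mem_range.mp hi
        have e2 : r - i - n = m - 1 - i := by omega
        rw [e2]
      -- combine
      rw [Finset.sum_add_distrib, Finset.sum_add_distrib,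
        Finset.sum_congr rfl hL, Finset.sum_congr rfl hmid, Finset.sum_add_distrib,
        hA, hB1, hB2, hC] at key
      have hcomb : (∑ i ∈ Finset.range m, (((r-i:ℕ):ℂ) - (p:ℂ)) • (xv ρ (i+1)) (schur (xv ρ) (m-1-i) v))
          + ∑ i ∈ Finset.range m, (((n+i+1:ℕ)):ℂ) • (xv ρ (i+1)) (schur (xv ρ) (m-1-i) v)
          = (((r:ℂ)+1+(n:ℂ)-(p:ℂ)) * (m:ℂ)) • schur (xv ρ) m v := by
        rw [← Finset.sum_add_distrib]
        have : ∀ i ∈ Finset.range m,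
            (((r-i:ℕ):ℂ) - (p:ℂ)) • (xv ρ (i+1)) (schur (xv ρ) (m-1-i) v)
              + (((n+i+1:ℕ)):ℂ) • (xv ρ (i+1)) (schur (xv ρ) (m-1-i) v)
            = ((r:ℂ)+1+(n:ℂ)-(p:ℂ)) • (xv ρ (i+1)) (schur (xv ρ) (m-1-i) v) := by
          intro i hi
          have him : i < m := Finset.mem_range.mp hi
          rw [← add_smul]
          congr 1
          have hir : i ≤ r := by omega
          push_cast [Nat.cast_sub hir]
          ring
        rw [Finset.sum_congr rfl this, ← Finset.smul_sum, sum_xv_schur, smul_smul]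
      have hmC : (m:ℂ) = (r:ℂ)+1-(n:ℂ) := by
        rw [hm, Nat.cast_sub hnr]
        push_cast
        ring
      have key2 : ((r:ℂ)+1) • ρ.L (n:ℤ) (schur (xv ρ) (r+1) v)
          = ((((r:ℂ)+1+(n:ℂ)-(p:ℂ)) * (m:ℂ)) + (-(n:ℂ)*((p:ℂ)+1)) + ((n:ℂ)^2+(n:ℂ)))
              • schur (xv ρ) m v := by
        have hre : ∀ (a b c d : V), a + (c + b) + d = (a + b) + (c + d) :=
          fun a b c d => by abel
        rw [key, hre, hcomb]
        module
      have hsc : ((((r:ℂ)+1+(n:ℂ)-(p:ℂ)) * (m:ℂ)) + (-(n:ℂ)*((p:ℂ)+1)) + ((n:ℂ)^2+(n:ℂ)))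
          = ((r:ℂ)+1) * (((r:ℂ)+1) - (p:ℂ)) := by
        rw [hmC]
        ring
      rw [hsc, mul_smul] at key2
      have final := smul_right_injective V (Nat.cast_add_one_ne_zero r) key2
      show ρ.L (n:ℤ) (schur (xv ρ) (r+1) v)
          = if n ≤ r+1 then ((((r+1:ℕ)):ℂ) - (p:ℂ)) • schur (xv ρ) ((r+1) - n) v else 0
      rw [if_pos hnr, final, ← hm]
      congr 1
      push_cast
      ring
    · -- n > r + 1 : everything vanishes
      have hz : ∀ i ∈ Finset.range (r+1),
          (xv ρ (i+1)) (ρ.L (n:ℤ) (schur (xv ρ) (r-i) v))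
            + ((-(ρ.cLI)⁻¹) * ((i+1:ℕ):ℂ)) • ρ.I ((n:ℤ) - ((i+1:ℕ):ℤ)) (schur (xv ρ) (r-i) v)
            + (if i+1 = n then ((n:ℂ)^2 + (n:ℂ)) else 0) • (schur (xv ρ) (r-i) v) = 0 := by
        intro i hi
        have him : i < r + 1 := Finset.mem_range.mp hi
        rw [ih (r-i) (by omega), if_neg (by omega), map_zero, if_neg (by omega), hIS,
          hIv ((n:ℤ) - ((i+1:ℕ):ℤ)) (by omega), map_zero, smul_zero, zero_smul]
        simp
      rw [Finset.sum_congr rfl hz, Finset.sum_const, smul_zero] at key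
      rw [if_neg hnr]
      rcases smul_eq_zero.mp key with h | h
      · exact absurd h (Nat.cast_add_one_ne_zero r)
      · exact h

end Rep
/-- In any highest weight representation of the twisted Heisenberg-Virasoro algebra at
level zero (`C_I = 0`, `c_{L,I} ≠ 0`) with highest weight `(h, h_I)` and
`h_I/c_{L,I} - 1 = p ∈ ℤ_{>0}` (in particular in the Verma module
`V^{HVir}(c_L, 0, c_{L,I}, h, h_I)`), the vector
`Ω = S_p(-I(-1)/c_{L,I}, …, -I(-p)/c_{L,I}) · v` is a singular vector of conformal
weight `h + p`:  `L(n)Ω = I(n)Ω = 0` for all `n ≥ 1` and `L(0)Ω = (h + p)Ω`. -/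
theorem schur_singular_vector {V : Type*} [AddCommGroup V] [Module ℂ V]
    (ρ : HVirRep V) (v : V) (h hI : ℂ) (hc : ρ.cLI ≠ 0)
    (hLv : ∀ n : ℤ, 0 < n → ρ.L n v = 0) (hIv : ∀ n : ℤ, 0 < n → ρ.I n v = 0)
    (hL0 : ρ.L 0 v = h • v) (hI0 : ρ.I 0 v = hI • v)
    (p : ℕ) (hp : 0 < p) (hpd : hI / ρ.cLI - 1 = (p : ℂ)) :
    (∀ n : ℤ, 1 ≤ n →
        ρ.L n ((schur (fun j => (-(ρ.cLI)⁻¹) • ρ.I (-(j : ℤ))) p) v) = 0 ∧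
        ρ.I n ((schur (fun j => (-(ρ.cLI)⁻¹) • ρ.I (-(j : ℤ))) p) v) = 0) ∧
      ρ.L 0 ((schur (fun j => (-(ρ.cLI)⁻¹) • ρ.I (-(j : ℤ))) p) v) =
        (h + p) • ((schur (fun j => (-(ρ.cLI)⁻¹) • ρ.I (-(j : ℤ))) p) v) := by
  have hxv : (fun j : ℕ => (-(ρ.cLI)⁻¹) • ρ.I (-(j : ℤ))) = xv ρ := rfl
  rw [hxv]
  have hIc : hI = ((p:ℂ)+1) * ρ.cLI := by
    field_simp at hpd
    linear_combination hpd
  constructor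
  · intro n hn
    constructor
    · have hN : ((n.toNat : ℕ) : ℤ) = n := Int.toNat_of_nonneg (by omega)
      have h1 : 1 ≤ n.toNat := by omega
      have hL := L_schur_v ρ hc v hI p hLv hIv hI0 hIc n.toNat h1 p
      rw [hN] at hL
      rw [hL]
      split_ifs
      · rw [sub_self, zero_smul]
      · rfl
    · have hcomm := congrArg (fun T : Module.End ℂ V => T v) (I_comm_schur ρ n p).eq
      have hI' : ρ.I n ((schur (xv ρ) p) v) = (schur (xv ρ) p) (ρ.I n v) := by
        simpa using hcomm
      rw [hI', hIv n (by omega), map_zero]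
  · have h2 := congrArg (fun T : Module.End ℂ V => T v) (L0_schur ρ p)
    simp only [Module.End.mul_apply, LinearMap.add_apply, LinearMap.smul_apply] at h2
    rw [h2, hL0, map_smul, ← add_smul]
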